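/- Let H be an interval supergraph of G. Then β(G) ≤ 2·α(G)·φ(G,H)·(log₂(α(G)) + 1), where φ(G,H) is the maximum of β(G[W])/α(G[W]) over subsets W inducing cliques in H. -/

import Mathlib

open SimpleGraph

/-- `s` is an independent set in `G`: pairwise nonadjacent vertices. -/
def SimpleGraph.IsIndepFinset {V : Type*} (G : SimpleGraph V) (s : Finset V) : Prop :=
  (s : Set V).Pairwise fun a b => ¬ G.Adj a b

/-- The independence number `α(G)`: the largest size of an independent set. -/
noncomputable def indepNum {V : Type*} (G : SimpleGraph V) : ℕ :=
  sSup {n | ∃ s : Finset V, G.IsIndepFinset s ∧ s.card = n}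

/-- `C` is a clique cover of `G`: a family of cliques covering every vertex. -/
def SimpleGraph.IsCliqueCover {V : Type*} (G : SimpleGraph V) (C : Finset (Finset V)) : Prop :=
  (∀ c ∈ C, G.IsClique (c : Set V)) ∧ ∀ v : V, ∃ c ∈ C, v ∈ c

/-- The clique cover number `β(G)`: minimum number of cliques covering `V(G)`. -/
noncomputable def cliqueCoverNum {V : Type*} (G : SimpleGraph V) : ℕ :=
  sInf {n | ∃ C : Finset (Finset V), G.IsCliqueCover C ∧ C.card = n}

/-- `G` is an interval graph: the intersection graph of closed real intervals. -/
def IsIntervalGraph {V : Type*} (G : SimpleGraph V) : Prop :=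
  ∃ a b : V → ℝ, ∀ u v : V, G.Adj u v ↔
    u ≠ v ∧ (Set.Icc (a u) (b u) ∩ Set.Icc (a v) (b v)).Nonempty

/-- `G` is perfect (stated via clique covers): `β = α` on every induced subgraph. -/
def IsPerfectGraph {V : Type*} (G : SimpleGraph V) : Prop :=
  ∀ W : Finset V, cliqueCoverNum (G.induce (W : Set V)) = _root_.indepNum (G.induce (W : Set V))

/-- `φ(G,H)`: the maximum of `β(G[W])/α(G[W])` over subsets `W` inducing cliques in `H`. -/
noncomputable def phi {V : Type*} (G H : SimpleGraph V) : ℝ :=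
  sSup {x : ℝ | ∃ W : Finset V, H.IsClique (W : Set V) ∧
    x = (cliqueCoverNum (G.induce (W : Set V)) : ℝ) / (_root_.indepNum (G.induce (W : Set V)) : ℝ)}


/-! ### Auxiliary machinery -/

set_option linter.unusedSectionVars false

section IndepOn
variable {V : Type*} [Fintype V] (G : SimpleGraph V)

/-- largest independent set within `S` -/
noncomputable def indepOn (S : Finset V) : ℕ :=
  sSup {n | ∃ t : Finset V, t ⊆ S ∧ G.IsIndepFinset t ∧ t.card = n}

variable {G}

lemma indepFinset_empty : G.IsIndepFinset (∅ : Finset V) := by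
  simp [SimpleGraph.IsIndepFinset]

lemma indepOn_bdd (S : Finset V) :
    BddAbove {n | ∃ t : Finset V, t ⊆ S ∧ G.IsIndepFinset t ∧ t.card = n} := by
  refine ⟨S.card, ?_⟩
  rintro n ⟨t, hts, _, rfl⟩
  exact Finset.card_le_card hts

lemma le_indepOn {S t : Finset V} (hts : t ⊆ S) (ht : G.IsIndepFinset t) :
    t.card ≤ indepOn G S :=
  le_csSup (indepOn_bdd S) ⟨t, hts, ht, rfl⟩

lemma indepOn_zero_mem (S : Finset V) :
    (0:ℕ) ∈ {n | ∃ t : Finset V, t ⊆ S ∧ G.IsIndepFinset t ∧ t.card = n} :=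
  ⟨∅, Finset.empty_subset S, indepFinset_empty, Finset.card_empty⟩

lemma indepOn_le {S : Finset V} {k : ℕ}
    (h : ∀ t : Finset V, t ⊆ S → G.IsIndepFinset t → t.card ≤ k) :
    indepOn G S ≤ k :=
  csSup_le (Set.nonempty_of_mem (indepOn_zero_mem S))
    (by rintro n ⟨t, hts, ht, rfl⟩; exact h t hts ht)

lemma indepOn_mono {S S' : Finset V} (h : S ⊆ S') : indepOn G S ≤ indepOn G S' :=
  indepOn_le fun t hts ht => le_indepOn (hts.trans h) ht

lemma exists_indepOn (S : Finset V) :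
    ∃ t : Finset V, t ⊆ S ∧ G.IsIndepFinset t ∧ t.card = indepOn G S :=
  Nat.sSup_mem (Set.nonempty_of_mem (indepOn_zero_mem S)) (indepOn_bdd S)

lemma one_le_indepOn {S : Finset V} {v : V} (hv : v ∈ S) : 1 ≤ indepOn G S := by
  have := le_indepOn (G := G) (t := {v}) (by simpa using hv) (by simp [SimpleGraph.IsIndepFinset])
  simpa using this

lemma indepOn_empty : indepOn G (∅ : Finset V) = 0 :=
  Nat.le_zero.1 (indepOn_le fun t ht _ => by
    have : t = ∅ := Finset.subset_empty.1 ht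
    simp [this])

lemma indepOn_univ_le : indepOn G (Finset.univ : Finset V) ≤ _root_.indepNum G := by
  refine indepOn_le fun t _ ht => ?_
  refine le_csSup ⟨Fintype.card V, ?_⟩ ⟨t, ht, rfl⟩
  rintro n ⟨s, _, rfl⟩
  exact Finset.card_le_univ s

end IndepOn

/-- the recursion bound function -/
noncomputable def Cfun : ℕ → ℕ
  | 0 => 0
  | (n+1) => (n+1) + 2 * Cfun ((n+1)/2)
decreasing_by omega

lemma Cfun_eq {m : ℕ} (hm : 1 ≤ m) : Cfun m = m + 2 * Cfun (m/2) := by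
  obtain ⟨n, rfl⟩ := Nat.exists_eq_add_of_le hm
  rw [Nat.add_comm 1 n]
  rw [Cfun]

lemma Cfun_le (m : ℕ) : (Cfun m : ℝ) ≤ 2 * m * (Real.logb 2 m + 1) := by
  induction m using Nat.strong_induction_on with
  | _ m ih =>
    match m with
    | 0 => simp [Cfun]
    | 1 => norm_num [Cfun]
    | (n+2) =>
      set m := n + 2 with hm
      have hk : (m/2 : ℕ) < m := by omega
      have hk1 : 1 ≤ m/2 := by omega
      have ihk := ih (m/2) hk
      have hc : Cfun m = m + 2 * Cfun (m/2) := Cfun_eq (by omega)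
      have hlogk : Real.logb 2 ((m/2 : ℕ) : ℝ) + 1 > 0 := by
        have : (0:ℝ) ≤ Real.logb 2 ((m/2 : ℕ) : ℝ) := by
          apply Real.logb_nonneg (by norm_num)
          exact_mod_cast hk1
        linarith
      have h2k : ((m/2 : ℕ) : ℝ) ≤ (m : ℝ)/2 := by
        have := Nat.cast_div_le (α := ℝ) (m := m) (n := 2)
        simpa using this
      have hlogle : Real.logb 2 ((m/2 : ℕ) : ℝ) ≤ Real.logb 2 ((m:ℝ)/2) :=
        Real.logb_le_logb_of_le (by norm_num) (by exact_mod_cast hk1) h2k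
      have hlogdiv : Real.logb 2 ((m:ℝ)/2) = Real.logb 2 (m:ℝ) - 1 := by
        rw [Real.logb_div (by positivity) (by norm_num), Real.logb_self_eq_one] <;> norm_num
      have h2km : 2 * ((m/2:ℕ):ℝ) ≤ (m:ℝ) := by linarith
      calc (Cfun m : ℝ) = (m:ℝ) + 2 * (Cfun (m/2) : ℝ) := by rw [hc]; push_cast; ring
        _ ≤ (m:ℝ) + 2 * (2 * ((m/2:ℕ):ℝ) * (Real.logb 2 ((m/2:ℕ):ℝ) + 1)) := by linarith
        _ ≤ (m:ℝ) + 2 * ((m:ℝ) * (Real.logb 2 ((m/2:ℕ):ℝ) + 1)) := by nlinarith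
        _ ≤ (m:ℝ) + 2 * ((m:ℝ) * (Real.logb 2 ((m:ℝ)/2) + 1)) := by
            have hm0 : (0:ℝ) ≤ (m:ℝ) := by positivity
            nlinarith
        _ = (m:ℝ) + 2 * (m:ℝ) * Real.logb 2 (m:ℝ) := by rw [hlogdiv]; ring
        _ ≤ 2 * (m:ℝ) * (Real.logb 2 (m:ℝ) + 1) := by
            nlinarith [show (1:ℝ) ≤ (m:ℝ) by exact_mod_cast Nat.le_of_lt_succ (by omega)]

section Basic
variable {W : Type*} [Fintype W] {G : SimpleGraph W}

lemma coverSet_nonempty (G : SimpleGraph W) :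
    {n | ∃ C : Finset (Finset W), G.IsCliqueCover C ∧ C.card = n}.Nonempty := by
  classical
  refine ⟨(Finset.univ.image fun v : W => ({v} : Finset W)).card,
    Finset.univ.image fun v : W => ({v} : Finset W), ⟨?_, ?_⟩, rfl⟩
  · intro c hc
    obtain ⟨v, _, rfl⟩ := Finset.mem_image.1 hc
    simp [SimpleGraph.IsClique]
  · intro v
    exact ⟨{v}, Finset.mem_image_of_mem _ (Finset.mem_univ v), Finset.mem_singleton_self v⟩

lemma cliqueCoverNum_le {C : Finset (Finset W)} (h : G.IsCliqueCover C) :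
    cliqueCoverNum G ≤ C.card :=
  Nat.sInf_le ⟨C, h, rfl⟩

lemma exists_cliqueCover (G : SimpleGraph W) :
    ∃ C : Finset (Finset W), G.IsCliqueCover C ∧ C.card = cliqueCoverNum G :=
  Nat.sInf_mem (coverSet_nonempty G)

lemma cliqueCoverNum_le_card (G : SimpleGraph W) : cliqueCoverNum G ≤ Fintype.card W := by
  classical
  have h : G.IsCliqueCover (Finset.univ.image fun v : W => ({v} : Finset W)) := by
    constructor
    · intro c hc
      obtain ⟨v, _, rfl⟩ := Finset.mem_image.1 hc
      simp [SimpleGraph.IsClique]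
    · intro v
      exact ⟨{v}, Finset.mem_image_of_mem _ (Finset.mem_univ v), Finset.mem_singleton_self v⟩
  calc cliqueCoverNum G ≤ _ := cliqueCoverNum_le h
    _ ≤ (Finset.univ : Finset W).card := Finset.card_image_le
    _ = Fintype.card W := Finset.card_univ

lemma indepNum_bdd (G : SimpleGraph W) :
    BddAbove {n | ∃ s : Finset W, G.IsIndepFinset s ∧ s.card = n} := by
  refine ⟨Fintype.card W, ?_⟩
  rintro n ⟨s, _, rfl⟩
  exact Finset.card_le_univ s

lemma one_le_indepNum (v : W) : 1 ≤ _root_.indepNum G := by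
  have : ({v} : Finset W).card ≤ _root_.indepNum G :=
    le_csSup (indepNum_bdd G) ⟨{v}, by simp [SimpleGraph.IsIndepFinset], rfl⟩
  simpa using this

lemma cliqueCoverNum_eq_zero [IsEmpty W] (G : SimpleGraph W) : cliqueCoverNum G = 0 :=
  Nat.le_zero.1 (le_trans (cliqueCoverNum_le (C := ∅) ⟨by simp, fun v => isEmptyElim v⟩) (by simp))

end Basic

section Phi
variable {V : Type*} [Fintype V] {G H : SimpleGraph V}

lemma indepNum_induce_le_indepOn (M : Finset V) :
    _root_.indepNum (G.induce (M : Set V)) ≤ indepOn G M := by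
  classical
  refine csSup_le ⟨0, ∅, by simp [SimpleGraph.IsIndepFinset], rfl⟩ ?_
  rintro n ⟨s, hs, rfl⟩
  set emb : ↥(M : Set V) ↪ V := Function.Embedding.subtype _
  refine le_csSup ⟨M.card, ?_⟩ ⟨s.map emb, ?_, ?_, by simp⟩
  · rintro n ⟨t, hts, _, rfl⟩
    exact Finset.card_le_card hts
  · intro x hx
    obtain ⟨x', _, rfl⟩ := Finset.mem_map.1 hx
    exact Finset.mem_coe.1 x'.2
  · intro x hx y hy hxy hadj
    simp only [Finset.coe_map, Set.mem_image, Finset.mem_coe] at hx hy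
    obtain ⟨x', hx', rfl⟩ := hx
    obtain ⟨y', hy', rfl⟩ := hy
    have hne : x' ≠ y' := fun h => hxy (by rw [h])
    exact hs hx' hy' hne hadj

lemma phi_bdd : BddAbove {x : ℝ | ∃ W : Finset V, H.IsClique (W : Set V) ∧
    x = (cliqueCoverNum (G.induce (W : Set V)) : ℝ) / (_root_.indepNum (G.induce (W : Set V)) : ℝ)} := by
  classical
  refine ⟨(Fintype.card V : ℝ), ?_⟩
  rintro x ⟨W, _, rfl⟩
  rcases W.eq_empty_or_nonempty with rfl | ⟨v, hv⟩
  · have : IsEmpty ↥((∅ : Finset V) : Set V) := by simp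
    rw [cliqueCoverNum_eq_zero]
    simp only [Nat.cast_zero, zero_div]
    positivity
  · have hα : 1 ≤ _root_.indepNum (G.induce (W : Set V)) :=
      one_le_indepNum ⟨v, Finset.mem_coe.2 hv⟩
    have hβ : cliqueCoverNum (G.induce (W : Set V)) ≤ Fintype.card V := by
      refine le_trans (cliqueCoverNum_le_card _) ?_
      exact Fintype.card_le_of_injective Subtype.val Subtype.val_injective
    have h1 : (1:ℝ) ≤ (_root_.indepNum (G.induce (W : Set V)) : ℝ) := by exact_mod_cast hα
    calc (cliqueCoverNum (G.induce (W : Set V)) : ℝ) / (_root_.indepNum (G.induce (W : Set V)) : ℝ)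
        ≤ (cliqueCoverNum (G.induce (W : Set V)) : ℝ) := by
          apply div_le_self (by positivity) h1
      _ ≤ (Fintype.card V : ℝ) := by exact_mod_cast hβ

lemma phi_nonneg : 0 ≤ phi G H := by
  classical
  refine le_csSup phi_bdd ⟨∅, by simp, ?_⟩
  have : IsEmpty ↥((∅ : Finset V) : Set V) := by simp
  rw [cliqueCoverNum_eq_zero]
  simp

lemma ratio_le_phi {W : Finset V} (hW : H.IsClique (W : Set V)) :
    (cliqueCoverNum (G.induce (W : Set V)) : ℝ) ≤
      phi G H * (_root_.indepNum (G.induce (W : Set V)) : ℝ) := by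
  classical
  rcases W.eq_empty_or_nonempty with rfl | ⟨v, hv⟩
  · have : IsEmpty ↥((∅ : Finset V) : Set V) := by simp
    rw [cliqueCoverNum_eq_zero]
    have h0 := phi_nonneg (G := G) (H := H)
    simpa using mul_nonneg h0 (Nat.cast_nonneg _)
  · have hα : 1 ≤ _root_.indepNum (G.induce (W : Set V)) :=
      one_le_indepNum ⟨v, Finset.mem_coe.2 hv⟩
    have h1 : (0:ℝ) < (_root_.indepNum (G.induce (W : Set V)) : ℝ) := by exact_mod_cast hα
    have hmem : (cliqueCoverNum (G.induce (W : Set V)) : ℝ) /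
        (_root_.indepNum (G.induce (W : Set V)) : ℝ) ≤ phi G H :=
      le_csSup phi_bdd ⟨W, hW, rfl⟩
    rw [div_le_iff₀ h1] at hmem
    linarith [hmem]

lemma cover_of_Hclique (M : Finset V) (hM : H.IsClique (M : Set V)) :
    ∃ C : Finset (Finset V), (∀ c ∈ C, G.IsClique (c : Set V)) ∧ (∀ v ∈ M, ∃ c ∈ C, v ∈ c) ∧
      (C.card : ℝ) ≤ phi G H * (indepOn G M : ℝ) := by
  classical
  obtain ⟨D, ⟨hDclique, hDcover⟩, hDcard⟩ := exists_cliqueCover (G.induce (M : Set V))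
  set emb : ↥(M : Set V) ↪ V := Function.Embedding.subtype _
  refine ⟨D.image (fun c => c.map emb), ?_, ?_, ?_⟩
  · intro c hc
    obtain ⟨c', hc', rfl⟩ := Finset.mem_image.1 hc
    intro x hx y hy hxy
    simp only [Finset.coe_map, Set.mem_image, Finset.mem_coe] at hx hy
    obtain ⟨x', hx', rfl⟩ := hx
    obtain ⟨y', hy', rfl⟩ := hy
    have hne : x' ≠ y' := fun h => hxy (by rw [h])
    exact hDclique c' hc' hx' hy' hne
  · intro v hv
    obtain ⟨c, hc, hvc⟩ := hDcover ⟨v, Finset.mem_coe.2 hv⟩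
    exact ⟨c.map emb, Finset.mem_image_of_mem _ hc, Finset.mem_map_of_mem _ hvc⟩
  · calc ((D.image (fun c => c.map emb)).card : ℝ) ≤ (D.card : ℝ) := by
          exact_mod_cast Finset.card_image_le
      _ = (cliqueCoverNum (G.induce (M : Set V)) : ℝ) := by exact_mod_cast hDcard
      _ ≤ phi G H * (_root_.indepNum (G.induce (M : Set V)) : ℝ) := ratio_le_phi hM
      _ ≤ phi G H * (indepOn G M : ℝ) := by
          apply mul_le_mul_of_nonneg_left _ phi_nonneg
          exact_mod_cast indepNum_induce_le_indepOn M

end Phi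

section Rep
variable {V : Type*} [Fintype V]

lemma exists_good_rep {H : SimpleGraph V} (hH : IsIntervalGraph H) :
    ∃ a b : V → ℝ, (∀ v, a v ≤ b v) ∧ ∀ u v, H.Adj u v ↔
      u ≠ v ∧ (Set.Icc (a u) (b u) ∩ Set.Icc (a v) (b v)).Nonempty := by
  classical
  obtain ⟨a, b, hrep⟩ := hH
  set e := Fintype.equivFin V with he
  set Mx : ℕ := Finset.univ.sup (fun u : V => ⌈|a u| + |b u|⌉₊) with hMx
  set f : V → ℝ := fun v => (Mx : ℝ) + 1 + (e v : ℕ) with hf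
  have hfb : ∀ u v : V, b v < f u := by
    intro u v
    have h1 : b v ≤ (Mx : ℝ) := by
      have h2 : (⌈|a v| + |b v|⌉₊ : ℕ) ≤ Mx := Finset.le_sup (f := fun u : V => ⌈|a u| + |b u|⌉₊) (Finset.mem_univ v)
      have h3 : |a v| + |b v| ≤ (⌈|a v| + |b v|⌉₊ : ℝ) := Nat.le_ceil _
      have h4 : b v ≤ |a v| + |b v| := by
        have := abs_nonneg (a v); have := le_abs_self (b v); linarith
      have h5 : ((⌈|a v| + |b v|⌉₊ : ℕ) : ℝ) ≤ (Mx : ℝ) := by exact_mod_cast h2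
      linarith
    have : (0:ℝ) ≤ (e u : ℕ) := by positivity
    simp only [hf]
    linarith
  have hfinj : Function.Injective f := by
    intro u v huv
    simp only [hf] at huv
    have : ((e u : ℕ) : ℝ) = ((e v : ℕ) : ℝ) := by linarith
    have : (e u : ℕ) = (e v : ℕ) := by exact_mod_cast this
    exact e.injective (Fin.ext this)
  refine ⟨fun v => if a v ≤ b v then a v else f v,
          fun v => if a v ≤ b v then b v else f v, ?_, ?_⟩
  · intro v
    by_cases h : a v ≤ b v <;> simp [h]
  · intro u v
    rw [hrep u v]
    constructor
    · rintro ⟨huv, z, hzu, hzv⟩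
      simp only [Set.mem_Icc] at hzu hzv
      have hu : a u ≤ b u := le_trans hzu.1 hzu.2
      have hv : a v ≤ b v := le_trans hzv.1 hzv.2
      refine ⟨huv, z, ?_, ?_⟩ <;> simp only [Set.mem_Icc, if_pos hu, if_pos hv]
      · exact hzu
      · exact hzv
    · rintro ⟨huv, z, hzu, hzv⟩
      simp only [Set.mem_Icc] at hzu hzv
      by_cases hu : a u ≤ b u <;> by_cases hv : a v ≤ b v
      · rw [if_pos hu, if_pos hu] at hzu
        rw [if_pos hv, if_pos hv] at hzv
        exact ⟨huv, z, Set.mem_Icc.2 hzu, Set.mem_Icc.2 hzv⟩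
      · exfalso
        rw [if_pos hu, if_pos hu] at hzu
        rw [if_neg hv, if_neg hv] at hzv
        have := hfb v u
        linarith [hzu.1, hzu.2, hzv.1, hzv.2]
      · exfalso
        rw [if_neg hu, if_neg hu] at hzu
        rw [if_pos hv, if_pos hv] at hzv
        have := hfb u v
        linarith [hzu.1, hzu.2, hzv.1, hzv.2]
      · exfalso
        rw [if_neg hu, if_neg hu] at hzu
        rw [if_neg hv, if_neg hv] at hzv
        have hz1 : z = f u := le_antisymm hzu.2 hzu.1
        have hz2 : z = f v := le_antisymm hzv.2 hzv.1
        exact huv (hfinj (hz1 ▸ hz2))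

end Rep

section Main
variable {V : Type*} [Fintype V] {G H : SimpleGraph V}

lemma split_lemma (hle : G ≤ H) (a b : V → ℝ) (hab : ∀ v, a v ≤ b v)
    (hrep : ∀ u v, H.Adj u v ↔ u ≠ v ∧ (Set.Icc (a u) (b u) ∩ Set.Icc (a v) (b v)).Nonempty)
    (S : Finset V) (hS : S.Nonempty) :
    ∃ c : ℝ,
      2 * indepOn G (S.filter fun v => b v < c) ≤ indepOn G S ∧
      2 * indepOn G (S.filter fun v => c < a v) ≤ indepOn G S ∧
      H.IsClique ((S.filter fun v => a v ≤ c ∧ c ≤ b v) : Set V) := by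
  classical
  set m := indepOn G S with hm
  have hm1 : 1 ≤ m := one_le_indepOn hS.choose_spec
  set B : Finset ℝ := S.image b with hB
  have hBne : B.Nonempty := hS.image b
  set T : Finset ℝ := B.filter
    (fun c => m + 1 ≤ 2 * indepOn G (S.filter fun v => b v ≤ c)) with hT
  have hTne : T.Nonempty := by
    refine ⟨B.max' hBne, Finset.mem_filter.2 ⟨B.max'_mem hBne, ?_⟩⟩
    have hfull : S.filter (fun v => b v ≤ B.max' hBne) = S := by
      apply Finset.filter_true_of_mem
      intro v hv
      exact Finset.le_max' B (b v) (Finset.mem_image_of_mem b hv)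
    rw [hfull, ← hm]
    omega
  set c := T.min' hTne with hc
  have hcT : c ∈ T := T.min'_mem hTne
  have hcB : c ∈ B := (Finset.mem_filter.1 hcT).1
  have hcP : m + 1 ≤ 2 * indepOn G (S.filter fun v => b v ≤ c) :=
    (Finset.mem_filter.1 hcT).2
  refine ⟨c, ?_, ?_, ?_⟩
  -- left bound
  · set L := S.filter (fun v => b v < c) with hL
    rcases L.eq_empty_or_nonempty with hLe | hLne
    · rw [hLe, indepOn_empty]
      omega
    · obtain ⟨w, hwL, hwmax⟩ := L.exists_max_image b hLne
      have hwS : w ∈ S := (Finset.mem_filter.1 hwL).1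
      have hwB : b w ∈ B := Finset.mem_image_of_mem b hwS
      have hwlt : b w < c := (Finset.mem_filter.1 hwL).2
      have hnotT : b w ∉ T := by
        intro hmem
        exact absurd (T.min'_le (b w) hmem) (not_le.2 (hc ▸ hwlt))
      have hsmall : 2 * indepOn G (S.filter fun v => b v ≤ b w) ≤ m := by
        by_contra hcon
        exact hnotT (Finset.mem_filter.2 ⟨hwB, by omega⟩)
      have hLsub : L ⊆ S.filter (fun v => b v ≤ b w) := by
        intro v hv
        exact Finset.mem_filter.2 ⟨(Finset.mem_filter.1 hv).1, hwmax v hv⟩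
      have := indepOn_mono (G := G) hLsub
      omega
  -- right bound
  · set R := S.filter (fun v => c < a v) with hR
    set P := S.filter (fun v => b v ≤ c) with hP
    obtain ⟨t, htP, htI, htc⟩ := exists_indepOn (G := G) P
    obtain ⟨u, huR, huI, huc⟩ := exists_indepOn (G := G) R
    have hdisj : Disjoint t u := by
      rw [Finset.disjoint_left]
      intro v hvt hvu
      have h1 : b v ≤ c := (Finset.mem_filter.1 (htP hvt)).2
      have h2 : c < a v := (Finset.mem_filter.1 (huR hvu)).2
      linarith [hab v]
    have hcross : ∀ x ∈ t, ∀ y ∈ u, ¬ G.Adj x y := by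
      intro x hx y hy hadj
      obtain ⟨_, z, hzx, hzy⟩ := (hrep x y).1 (hle hadj)
      simp only [Set.mem_Icc] at hzx hzy
      have h1 : b x ≤ c := (Finset.mem_filter.1 (htP hx)).2
      have h2 : c < a y := (Finset.mem_filter.1 (huR hy)).2
      linarith [hzx.2, hzy.1]
    have hunionI : G.IsIndepFinset (t ∪ u) := by
      intro x hx y hy hxy
      simp only [Finset.coe_union, Set.mem_union, Finset.mem_coe] at hx hy
      rcases hx with hx | hx <;> rcases hy with hy | hy
      · exact htI hx hy hxy
      · exact hcross x hx y hy
      · intro hadj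
        exact hcross y hy x hx hadj.symm
      · exact huI hx hy hxy
    have hsub : t ∪ u ⊆ S := Finset.union_subset
      (htP.trans (Finset.filter_subset _ _)) (huR.trans (Finset.filter_subset _ _))
    have hcard : t.card + u.card ≤ m := by
      rw [← Finset.card_union_of_disjoint hdisj]
      exact le_indepOn hsub hunionI
    omega
  -- middle clique
  · intro x hx y hy hxy
    simp only [Finset.coe_filter, Set.mem_setOf_eq] at hx hy
    refine (hrep x y).2 ⟨hxy, c, ?_, ?_⟩ <;> simp only [Set.mem_Icc]
    · exact ⟨hx.2.1, hx.2.2⟩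
    · exact ⟨hy.2.1, hy.2.2⟩

lemma main_rec (hle : G ≤ H) (a b : V → ℝ) (hab : ∀ v, a v ≤ b v)
    (hrep : ∀ u v, H.Adj u v ↔ u ≠ v ∧ (Set.Icc (a u) (b u) ∩ Set.Icc (a v) (b v)).Nonempty)
    (m : ℕ) :
    ∀ S : Finset V, indepOn G S ≤ m →
      ∃ C : Finset (Finset V), (∀ c ∈ C, G.IsClique (c : Set V)) ∧
        (∀ v ∈ S, ∃ c ∈ C, v ∈ c) ∧ (C.card : ℝ) ≤ phi G H * (Cfun m : ℝ) := by
  classical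
  induction m using Nat.strong_induction_on with
  | _ m ih =>
    intro S hS
    rcases S.eq_empty_or_nonempty with rfl | hSne
    · refine ⟨∅, by simp, by simp, ?_⟩
      simpa using mul_nonneg (phi_nonneg (G := G) (H := H)) (Nat.cast_nonneg (Cfun m))
    · have hm1 : 1 ≤ m := le_trans (one_le_indepOn hSne.choose_spec) hS
      obtain ⟨c, hLb, hRb, hMc⟩ := split_lemma hle a b hab hrep S hSne
      set L := S.filter (fun v => b v < c) with hLdef
      set R := S.filter (fun v => c < a v) with hRdef
      set M := S.filter (fun v => a v ≤ c ∧ c ≤ b v) with hMdef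
      have hLm : indepOn G L ≤ m / 2 := by omega
      have hRm : indepOn G R ≤ m / 2 := by omega
      have hhalf : m / 2 < m := by omega
      obtain ⟨CL, hCL1, hCL2, hCL3⟩ := ih (m/2) hhalf L hLm
      obtain ⟨CR, hCR1, hCR2, hCR3⟩ := ih (m/2) hhalf R hRm
      obtain ⟨CM, hCM1, hCM2, hCM3⟩ := cover_of_Hclique (G := G) M hMc
      have hMS : M ⊆ S := Finset.filter_subset _ _
      have hMm : (indepOn G M : ℝ) ≤ (m : ℝ) := by
        have := le_trans (indepOn_mono (G := G) hMS) hS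
        exact_mod_cast this
      refine ⟨CL ∪ CR ∪ CM, ?_, ?_, ?_⟩
      · intro d hd
        rcases Finset.mem_union.1 hd with hd | hd
        · rcases Finset.mem_union.1 hd with hd | hd
          · exact hCL1 d hd
          · exact hCR1 d hd
        · exact hCM1 d hd
      · intro v hv
        by_cases h1 : b v < c
        · obtain ⟨d, hd, hvd⟩ := hCL2 v (Finset.mem_filter.2 ⟨hv, h1⟩)
          exact ⟨d, Finset.mem_union_left _ (Finset.mem_union_left _ hd), hvd⟩
        · by_cases h2 : c < a v
          · obtain ⟨d, hd, hvd⟩ := hCR2 v (Finset.mem_filter.2 ⟨hv, h2⟩)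
            exact ⟨d, Finset.mem_union_left _ (Finset.mem_union_right _ hd), hvd⟩
          · obtain ⟨d, hd, hvd⟩ := hCM2 v
              (Finset.mem_filter.2 ⟨hv, le_of_not_gt h2, le_of_not_gt h1⟩)
            exact ⟨d, Finset.mem_union_right _ hd, hvd⟩
      · have hcard : ((CL ∪ CR ∪ CM).card : ℝ) ≤ (CL.card : ℝ) + CR.card + CM.card := by
          have h1 : (CL ∪ CR ∪ CM).card ≤ (CL ∪ CR).card + CM.card := Finset.card_union_le _ _
          have h2 : (CL ∪ CR).card ≤ CL.card + CR.card := Finset.card_union_le _ _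
          have : (CL ∪ CR ∪ CM).card ≤ CL.card + CR.card + CM.card := by omega
          exact_mod_cast this
        have hphi := phi_nonneg (G := G) (H := H)
        have hCfun : phi G H * (Cfun (m/2) : ℝ) + phi G H * (Cfun (m/2) : ℝ) +
            phi G H * (m : ℝ) = phi G H * (Cfun m : ℝ) := by
          rw [Cfun_eq hm1]
          push_cast
          ring
        have hM3 : (CM.card : ℝ) ≤ phi G H * (m : ℝ) :=
          le_trans hCM3 (mul_le_mul_of_nonneg_left hMm hphi)
        linarith
end Main

theorem clique_cover_bound_interval_supergraph' {V : Type*} [Fintype V]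
    (G H : SimpleGraph V) (hle : G ≤ H) (hH : IsIntervalGraph H) :
    (cliqueCoverNum G : ℝ) ≤
      2 * (_root_.indepNum G : ℝ) * phi G H * (Real.logb 2 (_root_.indepNum G : ℝ) + 1) := by 
  classical
  obtain ⟨a, b, hab, hrep⟩ := exists_good_rep hH
  obtain ⟨C, hC1, hC2, hC3⟩ :=
    main_rec hle a b hab hrep (_root_.indepNum G) Finset.univ indepOn_univ_le
  have hcover : G.IsCliqueCover C := ⟨hC1, fun v => hC2 v (Finset.mem_univ v)⟩
  have h1 : (cliqueCoverNum G : ℝ) ≤ (C.card : ℝ) := by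
    exact_mod_cast cliqueCoverNum_le hcover
  have h2 := Cfun_le (_root_.indepNum G)
  have hphi := phi_nonneg (G := G) (H := H)
  calc (cliqueCoverNum G : ℝ) ≤ (C.card : ℝ) := h1
    _ ≤ phi G H * (Cfun (_root_.indepNum G) : ℝ) := hC3
    _ ≤ phi G H * (2 * (_root_.indepNum G : ℝ) * (Real.logb 2 (_root_.indepNum G : ℝ) + 1)) :=
        mul_le_mul_of_nonneg_left h2 hphi
    _ = 2 * (_root_.indepNum G : ℝ) * phi G H * (Real.logb 2 (_root_.indepNum G : ℝ) + 1) := by ring
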